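/- Let P, Q ∈ 𝒢 and suppose there exists R ∈ 𝒢 with R ≠ P and R ≠ Q such that for every X ∈ 𝒢 that is complementary to R, X is complementary to P or X is complementary to Q. Then P and Q are adjacent. -/

import Mathlib

open Submodule

/-- `X` belongs to the Grassmannian 𝒢: `X` is isomorphic (as a `K`-vector space)
to the quotient `V ⧸ X`, equivalently to one (hence every) complement of `X`. -/
def InG (K V : Type*) [DivisionRing K] [AddCommGroup V] [Module K V]
    (X : Submodule K V) : Prop :=
  Nonempty (X ≃ₗ[K] (V ⧸ X))

/-- `quotRank K V A B` is the dimension of the quotient space `B / (A ∩ B)`,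
where `A ∩ B` is viewed as a subspace of `B`.  For `A ≤ B` this is `dim (B/A)`. -/
noncomputable def quotRank (K V : Type*) [DivisionRing K] [AddCommGroup V] [Module K V]
    (A B : Submodule K V) : Cardinal :=
  Module.rank K (↥B ⧸ (A.comap B.subtype))

/-- `X` and `Y` are adjacent: `dim ((X+Y)/X) = dim ((X+Y)/Y) = 1`. -/
def Adjacent (K V : Type*) [DivisionRing K] [AddCommGroup V] [Module K V]
    (X Y : Submodule K V) : Prop :=
  quotRank K V X (X ⊔ Y) = 1 ∧ quotRank K V Y (X ⊔ Y) = 1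

section Aux

variable {K V : Type*} [DivisionRing K] [AddCommGroup V] [Module K V]

/-- Any subspace disjoint from `R` extends to a complement of `R`. -/
lemma exists_compl_ext (R U : Submodule K V) (h : Disjoint U R) :
    ∃ X : Submodule K V, U ≤ X ∧ IsCompl X R := by
  obtain ⟨C, hC⟩ := Submodule.exists_isCompl (U ⊔ R)
  refine ⟨U ⊔ C, le_sup_left, ?_, ?_⟩
  · rw [Submodule.disjoint_def]
    intro x hx hxR
    obtain ⟨u, hu, c, hc, rfl⟩ := Submodule.mem_sup.1 hx
    have hcUR : c ∈ U ⊔ R := by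
      have : c = (u + c) - u := by abel
      rw [this]
      exact sub_mem (le_sup_right (a := U) hxR) (le_sup_left (b := R) hu)
    have hc0 : c = 0 := (Submodule.disjoint_def.1 hC.disjoint.symm) c hc hcUR
    subst hc0
    rw [add_zero] at hxR ⊢
    exact (Submodule.disjoint_def.1 h) u hu hxR
  · rw [codisjoint_iff]
    have : U ⊔ C ⊔ R = U ⊔ R ⊔ C := by
      rw [sup_assoc, sup_assoc, sup_comm C R]
    rw [this, codisjoint_iff.1 hC.codisjoint]

/-- A complement of an element of 𝒢 is in 𝒢. -/
lemma inG_of_isCompl {R X : Submodule K V} (hR : InG K V R) (h : IsCompl X R) :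
    InG K V X := by
  obtain ⟨e⟩ := hR
  exact ⟨((Submodule.quotientEquivOfIsCompl R X h.symm).symm.trans
    (e.symm.trans (Submodule.quotientEquivOfIsCompl X R h).symm))⟩

/-- If every complement of `R` is a complement of `P`, then `P = R`. -/
lemma eq_of_all_compl {R P : Submodule K V}
    (h : ∀ X : Submodule K V, IsCompl X R → IsCompl X P) : P = R := by
  by_cases hPR : P ≤ R
  · obtain ⟨X, hX⟩ := R.exists_isCompl
    have hXP := h X hX.symm
    refine le_antisymm hPR ?_
    intro r hr
    have hmem : r ∈ X ⊔ P := by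
      rw [codisjoint_iff.1 hXP.codisjoint]; trivial
    obtain ⟨x, hx, p, hp, hxp⟩ := Submodule.mem_sup.1 hmem
    have hxR : x ∈ R := by
      have : x = r - p := by rw [← hxp]; abel
      rw [this]; exact sub_mem hr (hPR hp)
    have hx0 : x = 0 := (Submodule.disjoint_def.1 hX.disjoint) x hxR hx
    subst hx0
    rw [zero_add] at hxp
    rwa [← hxp]
  · obtain ⟨p, hpP, hpR⟩ := SetLike.not_le_iff_exists.1 hPR
    have hp0 : p ≠ 0 := fun h0 => hpR (h0 ▸ R.zero_mem)
    have hd : Disjoint (span K {p}) R := by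
      rw [Submodule.disjoint_def]
      intro x hx hxR
      obtain ⟨c, rfl⟩ := Submodule.mem_span_singleton.1 hx
      by_cases hc : c = 0
      · simp [hc]
      · exact absurd (by simpa [smul_smul, inv_mul_cancel₀ hc] using R.smul_mem c⁻¹ hxR) hpR
    obtain ⟨X, hle, hX⟩ := exists_compl_ext R _ hd
    have hXP := h X hX
    have hpX : p ∈ X := hle (Submodule.mem_span_singleton_self p)
    exact absurd ((Submodule.disjoint_def.1 hXP.disjoint) p hpX hpP) hp0

/-- A subspace not contained in either of two subspaces has an element avoiding both. -/
lemma exists_not_mem_two {P Q R : Submodule K V} (h1 : ¬ P ≤ Q) (h2 : ¬ P ≤ R) :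
    ∃ x, x ∈ P ∧ x ∉ Q ∧ x ∉ R := by
  obtain ⟨a, haP, haQ⟩ := SetLike.not_le_iff_exists.1 h1
  obtain ⟨b, hbP, hbR⟩ := SetLike.not_le_iff_exists.1 h2
  by_cases haR : a ∈ R
  · by_cases hbQ : b ∈ Q
    · refine ⟨a + b, add_mem haP hbP, fun h => haQ ?_, fun h => hbR ?_⟩
      · simpa using sub_mem h hbQ
      · simpa using sub_mem h haR
    · exact ⟨b, hbP, hbQ, hbR⟩
  · exact ⟨a, haP, haQ, haR⟩

/-- If a subspace is covered (elementwise) by two subspaces, it is contained in one of them. -/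
lemma le_of_cover {Q P F : Submodule K V} (h : ∀ x ∈ Q, x ∈ P ∨ x ∈ F)
    (hQP : ¬ Q ≤ P) : Q ≤ F := by
  obtain ⟨y, hyQ, hyP⟩ := SetLike.not_le_iff_exists.1 hQP
  have hyF : y ∈ F := (h y hyQ).resolve_left hyP
  intro x hx
  rcases h x hx with hxP | hxF
  · rcases h (x + y) (add_mem hx hyQ) with h1 | h2
    · exact absurd (by simpa using sub_mem h1 hxP) hyP
    · simpa using sub_mem h2 hyF
  · exact hxF

/-- The central lemma: under the hypotheses of the theorem, `Q ⊄ P` and no two elements of `Q`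
are independent modulo `P`. -/
lemma keyQ (P Q R : Submodule K V) (hRP : R ≠ P) (hRQ : R ≠ Q)
    (hmain : ∀ X : Submodule K V, IsCompl X R → (IsCompl X P ∨ IsCompl X Q)) :
    ¬ Q ≤ P ∧ ∀ q₁ q₂ : V, q₁ ∈ Q → q₂ ∈ Q →
      (∀ s t : K, s • q₁ + t • q₂ ∈ P → s = 0 ∧ t = 0) → False := by
  -- P ≠ Q
  have hPQ : P ≠ Q := by
    rintro rfl
    exact hRP (eq_of_all_compl (fun X hX => (hmain X hX).elim id id)).symm
  -- ¬ Q ≤ R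
  have hQleR : ¬ Q ≤ R := by
    intro hle
    obtain ⟨r, hrR, hrQ⟩ := SetLike.not_le_iff_exists.1
      (fun h : R ≤ Q => hRQ (le_antisymm h hle))
    have hkill : ∀ X : Submodule K V, IsCompl X R → ¬ IsCompl X Q := by
      intro X hX hXQ
      have hmem : r ∈ X ⊔ Q := by rw [codisjoint_iff.1 hXQ.codisjoint]; trivial
      obtain ⟨x, hx, q, hq, hxq⟩ := Submodule.mem_sup.1 hmem
      have hxR : x ∈ R := by
        have : x = r - q := by rw [← hxq]; abel
        rw [this]; exact sub_mem hrR (hle hq)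
      have hx0 : x = 0 := (Submodule.disjoint_def.1 hX.disjoint) x hx hxR
      subst hx0
      rw [zero_add] at hxq
      exact hrQ (hxq ▸ hq)
    exact hRP (eq_of_all_compl
      (fun X hX => (hmain X hX).resolve_right (hkill X hX))).symm
  -- ¬ P ≤ R
  have hPleR : ¬ P ≤ R := by
    intro hle
    obtain ⟨r, hrR, hrP⟩ := SetLike.not_le_iff_exists.1
      (fun h : R ≤ P => hRP (le_antisymm h hle))
    have hkill : ∀ X : Submodule K V, IsCompl X R → ¬ IsCompl X P := by
      intro X hX hXP
      have hmem : r ∈ X ⊔ P := by rw [codisjoint_iff.1 hXP.codisjoint]; trivial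
      obtain ⟨x, hx, p, hp, hxp⟩ := Submodule.mem_sup.1 hmem
      have hxR : x ∈ R := by
        have : x = r - p := by rw [← hxp]; abel
        rw [this]; exact sub_mem hrR (hle hp)
      have hx0 : x = 0 := (Submodule.disjoint_def.1 hX.disjoint) x hx hxR
      subst hx0
      rw [zero_add] at hxp
      exact hrP (hxp ▸ hp)
    exact hRQ (eq_of_all_compl
      (fun X hX => (hmain X hX).resolve_left (hkill X hX))).symm
  -- ¬ R ≤ Q
  have hRleQ : ¬ R ≤ Q := by
    intro hle
    obtain ⟨q, hqQ, hqR⟩ := SetLike.not_le_iff_exists.1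
      (fun h : Q ≤ R => hRQ (le_antisymm hle h))
    have hkill : ∀ X : Submodule K V, IsCompl X R → ¬ IsCompl X Q := by
      intro X hX hXQ
      have hmem : q ∈ X ⊔ R := by rw [codisjoint_iff.1 hX.codisjoint]; trivial
      obtain ⟨x, hx, r, hr, hxr⟩ := Submodule.mem_sup.1 hmem
      have hxQ : x ∈ Q := by
        have : x = q - r := by rw [← hxr]; abel
        rw [this]; exact sub_mem hqQ (hle hr)
      have hx0 : x = 0 := (Submodule.disjoint_def.1 hXQ.disjoint) x hx hxQ
      subst hx0
      rw [zero_add] at hxr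
      exact hqR (hxr ▸ hr)
    exact hRP (eq_of_all_compl
      (fun X hX => (hmain X hX).resolve_right (hkill X hX))).symm
  -- ¬ R ≤ P
  have hRleP : ¬ R ≤ P := by
    intro hle
    obtain ⟨p, hpP, hpR⟩ := SetLike.not_le_iff_exists.1
      (fun h : P ≤ R => hRP (le_antisymm hle h))
    have hkill : ∀ X : Submodule K V, IsCompl X R → ¬ IsCompl X P := by
      intro X hX hXP
      have hmem : p ∈ X ⊔ R := by rw [codisjoint_iff.1 hX.codisjoint]; trivial
      obtain ⟨x, hx, r, hr, hxr⟩ := Submodule.mem_sup.1 hmem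
      have hxP : x ∈ P := by
        have : x = p - r := by rw [← hxr]; abel
        rw [this]; exact sub_mem hpP (hle hr)
      have hx0 : x = 0 := (Submodule.disjoint_def.1 hXP.disjoint) x hx hxP
      subst hx0
      rw [zero_add] at hxr
      exact hpR (hxr ▸ hr)
    exact hRQ (eq_of_all_compl
      (fun X hX => (hmain X hX).resolve_left (hkill X hX))).symm
  -- ¬ Q ≤ P
  have hQleP : ¬ Q ≤ P := by
    intro hle
    obtain ⟨q, hqQ, hqR⟩ := SetLike.not_le_iff_exists.1 hQleR
    have hq0 : q ≠ 0 := fun h0 => hqR (h0 ▸ R.zero_mem)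
    have hd : Disjoint (span K {q}) R := by
      rw [Submodule.disjoint_def]
      intro x hx hxR
      obtain ⟨c, rfl⟩ := Submodule.mem_span_singleton.1 hx
      by_cases hc : c = 0
      · simp [hc]
      · exact absurd (by simpa [smul_smul, inv_mul_cancel₀ hc] using R.smul_mem c⁻¹ hxR) hqR
    obtain ⟨X, hleX, hX⟩ := exists_compl_ext R _ hd
    have hqX : q ∈ X := hleX (Submodule.mem_span_singleton_self q)
    rcases hmain X hX with hXP | hXQ
    · exact hq0 ((Submodule.disjoint_def.1 hXP.disjoint) q hqX (hle hqQ))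
    · exact hq0 ((Submodule.disjoint_def.1 hXQ.disjoint) q hqX hqQ)
  -- ¬ P ≤ Q
  have hPleQ : ¬ P ≤ Q := by
    intro hle
    obtain ⟨p, hpP, hpR⟩ := SetLike.not_le_iff_exists.1 hPleR
    have hp0 : p ≠ 0 := fun h0 => hpR (h0 ▸ R.zero_mem)
    have hd : Disjoint (span K {p}) R := by
      rw [Submodule.disjoint_def]
      intro x hx hxR
      obtain ⟨c, rfl⟩ := Submodule.mem_span_singleton.1 hx
      by_cases hc : c = 0
      · simp [hc]
      · exact absurd (by simpa [smul_smul, inv_mul_cancel₀ hc] using R.smul_mem c⁻¹ hxR) hpR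
    obtain ⟨X, hleX, hX⟩ := exists_compl_ext R _ hd
    have hpX : p ∈ X := hleX (Submodule.mem_span_singleton_self p)
    rcases hmain X hX with hXP | hXQ
    · exact hp0 ((Submodule.disjoint_def.1 hXP.disjoint) p hpX hpP)
    · exact hp0 ((Submodule.disjoint_def.1 hXQ.disjoint) p hpX (hle hpP))
  refine ⟨hQleP, ?_⟩
  intro q₁ q₂ hq₁ hq₂ hindep
  by_cases hC : ∃ p q : V, p ∈ P ∧ q ∈ Q ∧ p ∉ R ∧ q ∉ P ∧
      Disjoint (span K {p} ⊔ span K {q}) R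
  · -- a "free pair" exists: extend it to a complement of R killing both P and Q
    obtain ⟨p, q, hpP, hqQ, hpR, hqP, hd⟩ := hC
    obtain ⟨X, hleX, hX⟩ := exists_compl_ext R _ hd
    have hpX : p ∈ X := hleX (le_sup_left (b := span K {q})
      (Submodule.mem_span_singleton_self p))
    have hqX : q ∈ X := hleX (le_sup_right (a := span K {p})
      (Submodule.mem_span_singleton_self q))
    have hp0 : p ≠ 0 := fun h0 => hpR (h0 ▸ R.zero_mem)
    have hq0 : q ≠ 0 := fun h0 => hqP (h0 ▸ P.zero_mem)
    rcases hmain X hX with hXP | hXQ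
    · exact hp0 ((Submodule.disjoint_def.1 hXP.disjoint) p hpX hpP)
    · exact hq0 ((Submodule.disjoint_def.1 hXQ.disjoint) q hqX hqQ)
  · -- no free pair: the configuration is very rigid
    push_neg at hC
    -- helper: produce the scalar λ with p + λ•q ∈ R
    have lam_ex : ∀ p q : V, p ∈ P → p ∉ R → q ∈ Q → q ∉ P → q ∉ R →
        ∃ lam : K, lam ≠ 0 ∧ p + lam • q ∈ R := by
      intro p q hp hpR hq hqP hqR
      have hnd := hC p q hp hq hpR hqP
      rw [Submodule.disjoint_def] at hnd
      push_neg at hnd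
      obtain ⟨x, hxU, hxR, hx0⟩ := hnd
      obtain ⟨a, ha, b, hb, rfl⟩ := Submodule.mem_sup.1 hxU
      obtain ⟨s, rfl⟩ := Submodule.mem_span_singleton.1 ha
      obtain ⟨t, rfl⟩ := Submodule.mem_span_singleton.1 hb
      have hs : s ≠ 0 := by
        rintro rfl
        rw [zero_smul, zero_add] at hxR hx0
        have ht : t ≠ 0 := fun h0 => hx0 (by simp [h0])
        exact hqR (by simpa [smul_smul, inv_mul_cancel₀ ht] using R.smul_mem t⁻¹ hxR)
      have ht : t ≠ 0 := by
        rintro rfl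
        rw [zero_smul, add_zero] at hxR hx0
        exact hpR (by simpa [smul_smul, inv_mul_cancel₀ hs] using R.smul_mem s⁻¹ hxR)
      refine ⟨s⁻¹ * t, mul_ne_zero (inv_ne_zero hs) ht, ?_⟩
      have := R.smul_mem s⁻¹ hxR
      rwa [smul_add, smul_smul, smul_smul, inv_mul_cancel₀ hs, one_smul] at this
    obtain ⟨p₀, hp₀P, hp₀Q, hp₀R⟩ := exists_not_mem_two hPleQ hPleR
    obtain ⟨q₀', hq₀'Q, hq₀'P, hq₀'R⟩ := exists_not_mem_two hQleP hQleR
    obtain ⟨lam, hlam, hr⟩ := lam_ex p₀ q₀' hp₀P hp₀R hq₀'Q hq₀'P hq₀'R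
    set q₀ : V := lam • q₀' with hq₀def
    have hq₀Q : q₀ ∈ Q := Q.smul_mem lam hq₀'Q
    have hq₀P : q₀ ∉ P := by
      intro h
      exact hq₀'P (by simpa [hq₀def, smul_smul, inv_mul_cancel₀ hlam] using P.smul_mem lam⁻¹ h)
    have hq₀R : q₀ ∉ R := by
      intro h
      exact hq₀'R (by simpa [hq₀def, smul_smul, inv_mul_cancel₀ hlam] using R.smul_mem lam⁻¹ h)
    have hrR : p₀ + q₀ ∈ R := hr
    -- Q is contained in span{q₀} ⊔ (Q ⊓ R)
    have hQF : Q ≤ span K {q₀} ⊔ (Q ⊓ R) := by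
      apply le_of_cover (P := P) ?_ hQleP
      intro x hxQ
      by_cases hxP : x ∈ P
      · exact Or.inl hxP
      by_cases hxR : x ∈ R
      · exact Or.inr (le_sup_right (a := span K {q₀}) (Submodule.mem_inf.2 ⟨hxQ, hxR⟩))
      obtain ⟨mu, hmu, hmuR⟩ := lam_ex p₀ x hp₀P hp₀R hxQ hxP hxR
      have hsub : mu • x - q₀ ∈ Q ⊓ R := by
        refine Submodule.mem_inf.2 ⟨sub_mem (Q.smul_mem mu hxQ) hq₀Q, ?_⟩
        have : mu • x - q₀ = (p₀ + mu • x) - (p₀ + q₀) := by abel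
        rw [this]; exact sub_mem hmuR hrR
      have hmux : mu • x ∈ span K {q₀} ⊔ (Q ⊓ R) := by
        have hq₀F : q₀ ∈ span K {q₀} ⊔ (Q ⊓ R) :=
          le_sup_left (b := Q ⊓ R) (Submodule.mem_span_singleton_self q₀)
        have := add_mem (le_sup_right (a := span K {q₀}) hsub) hq₀F
        simpa using this
      right
      have := Submodule.smul_mem _ mu⁻¹ hmux
      rwa [smul_smul, inv_mul_cancel₀ hmu, one_smul] at this
    -- P is contained in span{p₀} ⊔ (P ⊓ R)
    have hPF : P ≤ span K {p₀} ⊔ (P ⊓ R) := by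
      apply le_of_cover (P := Q) ?_ hPleQ
      intro x hxP
      by_cases hxQ : x ∈ Q
      · exact Or.inl hxQ
      by_cases hxR : x ∈ R
      · exact Or.inr (le_sup_right (a := span K {p₀}) (Submodule.mem_inf.2 ⟨hxP, hxR⟩))
      obtain ⟨mu, hmu, hmuR⟩ := lam_ex x q₀ hxP hxR hq₀Q hq₀P hq₀R
      -- mu⁻¹ • x + q₀ ∈ R
      have hmuR' : mu⁻¹ • x + q₀ ∈ R := by
        have := R.smul_mem mu⁻¹ hmuR
        rwa [smul_add, smul_smul, inv_mul_cancel₀ hmu, one_smul] at this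
      have hsub : mu⁻¹ • x - p₀ ∈ P ⊓ R := by
        refine Submodule.mem_inf.2 ⟨sub_mem (P.smul_mem mu⁻¹ hxP) hp₀P, ?_⟩
        have : mu⁻¹ • x - p₀ = (mu⁻¹ • x + q₀) - (p₀ + q₀) := by abel
        rw [this]; exact sub_mem hmuR' hrR
      have hmux : mu⁻¹ • x ∈ span K {p₀} ⊔ (P ⊓ R) := by
        have hp₀F : p₀ ∈ span K {p₀} ⊔ (P ⊓ R) :=
          le_sup_left (b := P ⊓ R) (Submodule.mem_span_singleton_self p₀)
        have := add_mem (le_sup_right (a := span K {p₀}) hsub) hp₀F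
        simpa using this
      right
      have := Submodule.smul_mem _ mu hmux
      rwa [smul_smul, mul_inv_cancel₀ hmu, one_smul] at this
    -- there is a common complement of R and P
    have hX₁ : ∃ X₁ : Submodule K V, IsCompl X₁ R ∧ IsCompl X₁ P := by
      by_contra h'
      push_neg at h'
      exact hRQ (eq_of_all_compl
        (fun X hX => (hmain X hX).resolve_left (h' X hX))).symm
    obtain ⟨X₁, hX₁R, hX₁P⟩ := hX₁
    -- decompose p₀ = x' + a with a ∈ R
    have hp₀mem : p₀ ∈ X₁ ⊔ R := by rw [codisjoint_iff.1 hX₁R.codisjoint]; trivial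
    obtain ⟨x', hx', a, haR, hxa⟩ := Submodule.mem_sup.1 hp₀mem
    -- R ≤ span{a} ⊔ (P ⊓ R)
    have hRa : R ≤ span K {a} ⊔ (P ⊓ R) := by
      intro x hx
      have hxmem : x ∈ X₁ ⊔ P := by rw [codisjoint_iff.1 hX₁P.codisjoint]; trivial
      obtain ⟨x₁, hx₁, y, hyP, hxy⟩ := Submodule.mem_sup.1 hxmem
      obtain ⟨w, hw, u, huPR, hwu⟩ := Submodule.mem_sup.1 (hPF hyP)
      obtain ⟨c, rfl⟩ := Submodule.mem_span_singleton.1 hw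
      -- y = c • p₀ + u,  p₀ = x' + a
      have hz : x - (c • a + u) ∈ X₁ := by
        have hxval : x = x₁ + (c • p₀ + u) := by rw [← hwu] at hxy; exact hxy.symm
        have : x - (c • a + u) = x₁ + c • x' := by
          rw [hxval, ← hxa]; rw [smul_add]; abel
        rw [this]
        exact add_mem hx₁ (X₁.smul_mem c hx')
      have hzR : x - (c • a + u) ∈ R := by
        refine sub_mem hx (add_mem (R.smul_mem c haR) ?_)
        exact (Submodule.mem_inf.1 huPR).2
      have hz0 : x - (c • a + u) = 0 := (Submodule.disjoint_def.1 hX₁R.disjoint) _ hz hzR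
      have : x = c • a + u := by
        have := sub_eq_zero.1 hz0; exact this
      rw [this]
      exact add_mem (le_sup_left (b := P ⊓ R) (Submodule.mem_span_singleton.2 ⟨c, rfl⟩))
        (le_sup_right (a := span K {a}) huPR)
    -- a ∉ P
    have haP : a ∉ P := by
      intro h
      apply hRleP
      intro x hx
      obtain ⟨w, hw, u, huPR, hwu⟩ := Submodule.mem_sup.1 (hRa hx)
      obtain ⟨c, rfl⟩ := Submodule.mem_span_singleton.1 hw
      rw [← hwu]
      exact add_mem (P.smul_mem c h) (Submodule.mem_inf.1 huPR).1
    -- r₀ := p₀ + q₀ is in R but not in P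
    have hrP : p₀ + q₀ ∉ P := by
      intro h
      exact hq₀P (by simpa using sub_mem h hp₀P)
    -- R ≤ span{p₀ + q₀} ⊔ (P ⊓ R)
    have hRr : R ≤ span K {p₀ + q₀} ⊔ (P ⊓ R) := by
      obtain ⟨w, hw, u, huPR, hwu⟩ := Submodule.mem_sup.1 (hRa hrR)
      obtain ⟨c, rfl⟩ := Submodule.mem_span_singleton.1 hw
      have hc : c ≠ 0 := by
        rintro rfl
        rw [zero_smul, zero_add] at hwu
        exact hrP (hwu ▸ (Submodule.mem_inf.1 huPR).1)
      -- a = c⁻¹ • (p₀+q₀) - c⁻¹ • u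
      have haF : a ∈ span K {p₀ + q₀} ⊔ (P ⊓ R) := by
        have : a = c⁻¹ • (p₀ + q₀) - c⁻¹ • u := by
          rw [← hwu]; rw [smul_add, smul_smul, inv_mul_cancel₀ hc, one_smul]; abel
        rw [this]
        exact sub_mem
          (le_sup_left (b := P ⊓ R) (Submodule.mem_span_singleton.2 ⟨c⁻¹, rfl⟩))
          (le_sup_right (a := span K {p₀ + q₀}) (Submodule.smul_mem _ c⁻¹ huPR))
      intro x hx
      obtain ⟨w', hw', u', huPR', hwu'⟩ := Submodule.mem_sup.1 (hRa hx)
      obtain ⟨c', rfl⟩ := Submodule.mem_span_singleton.1 hw'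
      rw [← hwu']
      exact add_mem (Submodule.smul_mem _ c' haF)
        (le_sup_right (a := span K {p₀ + q₀}) huPR')
    -- finally: Q ≤ span{q₀} ⊔ (P ⊓ Q)
    have hQD : Q ≤ span K {q₀} ⊔ (P ⊓ Q) := by
      intro x hx
      obtain ⟨w, hw, b, hbQR, hwb⟩ := Submodule.mem_sup.1 (hQF hx)
      obtain ⟨s, rfl⟩ := Submodule.mem_span_singleton.1 hw
      obtain ⟨w', hw', u, huPR, hwu⟩ := Submodule.mem_sup.1 (hRr (Submodule.mem_inf.1 hbQR).2)
      obtain ⟨c, rfl⟩ := Submodule.mem_span_singleton.1 hw'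
      -- b = c • (p₀ + q₀) + u ; set d := b - c • q₀ = c • p₀ + u ∈ P ⊓ Q
      have hdP : b - c • q₀ ∈ P := by
        have : b - c • q₀ = c • p₀ + u := by
          rw [← hwu, smul_add]; abel
        rw [this]
        exact add_mem (P.smul_mem c hp₀P) (Submodule.mem_inf.1 huPR).1
      have hdQ : b - c • q₀ ∈ Q := sub_mem (Submodule.mem_inf.1 hbQR).1 (Q.smul_mem c hq₀Q)
      have hxval : x = (s + c) • q₀ + (b - c • q₀) := by
        rw [add_smul, ← hwb]; abel
      rw [hxval]
      exact add_mem
        (le_sup_left (b := P ⊓ Q) (Submodule.mem_span_singleton.2 ⟨s + c, rfl⟩))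
        (le_sup_right (a := span K {q₀}) (Submodule.mem_inf.2 ⟨hdP, hdQ⟩))
    -- contradiction with the independent pair
    obtain ⟨w₁, hw₁, d₁, hd₁, hwd₁⟩ := Submodule.mem_sup.1 (hQD hq₁)
    obtain ⟨s₁, rfl⟩ := Submodule.mem_span_singleton.1 hw₁
    obtain ⟨w₂, hw₂, d₂, hd₂, hwd₂⟩ := Submodule.mem_sup.1 (hQD hq₂)
    obtain ⟨s₂, rfl⟩ := Submodule.mem_span_singleton.1 hw₂
    by_cases hs₁ : s₁ = 0
    · -- q₁ = d₁ ∈ P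
      have hq₁P : (1 : K) • q₁ + (0 : K) • q₂ ∈ P := by
        rw [one_smul, zero_smul, add_zero, ← hwd₁, hs₁, zero_smul, zero_add]
        exact (Submodule.mem_inf.1 hd₁).1
      exact one_ne_zero ((hindep 1 0 hq₁P).1)
    · have hcomb : (s₂ * s₁⁻¹) • q₁ + (-1 : K) • q₂ ∈ P := by
        have : (s₂ * s₁⁻¹) • q₁ + (-1 : K) • q₂ = (s₂ * s₁⁻¹) • d₁ - d₂ := by
          rw [← hwd₁, ← hwd₂]
          rw [smul_add, smul_smul, mul_assoc, inv_mul_cancel₀ hs₁, mul_one]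
          simp only [neg_one_smul, neg_add]
          abel
        rw [this]
        exact sub_mem (P.smul_mem _ (Submodule.mem_inf.1 hd₁).1) (Submodule.mem_inf.1 hd₂).1
      have := (hindep (s₂ * s₁⁻¹) (-1) hcomb).2
      exact one_ne_zero (neg_eq_zero.1 this)

/-- Rank computation: from "Q ⊄ P and no independent pair mod P" we get rank 1. -/
lemma quotRank_eq_one (P Q : Submodule K V) (hQP : ¬ Q ≤ P)
    (hpair : ∀ q₁ q₂ : V, q₁ ∈ Q → q₂ ∈ Q →
      (∀ s t : K, s • q₁ + t • q₂ ∈ P → s = 0 ∧ t = 0) → False) :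
    quotRank K V P (P ⊔ Q) = 1 := by
  have e := LinearMap.quotientInfEquivSupQuotient Q P
  rw [quotRank, sup_comm P Q, ← e.rank_eq]
  obtain ⟨q, hqQ, hqP⟩ := SetLike.not_le_iff_exists.1 hQP
  set M := (↥Q ⧸ Submodule.comap Q.subtype (Q ⊓ P))
  have hmk : ∀ x : ↥Q, ((Submodule.Quotient.mk x : M) = 0 ↔ (x : V) ∈ P) := by
    intro x
    rw [Submodule.Quotient.mk_eq_zero, Submodule.mem_comap]
    constructor
    · intro h; exact (Submodule.mem_inf.1 h).2
    · intro h; exact Submodule.mem_inf.2 ⟨x.2, h⟩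
  have hv₀ : (Submodule.Quotient.mk (⟨q, hqQ⟩ : ↥Q) : M) ≠ 0 := by
    simp only [ne_eq, hmk]; exact hqP
  refine le_antisymm ?_ ?_
  · rw [rank_le_one_iff]
    refine ⟨Submodule.Quotient.mk (⟨q, hqQ⟩ : ↥Q), ?_⟩
    intro v
    obtain ⟨⟨w, hwQ⟩, rfl⟩ := Submodule.Quotient.mk_surjective _ v
    by_contra hno
    push_neg at hno
    refine hpair q w hqQ hwQ ?_
    intro s t hst
    constructor
    · by_cases ht : t = 0
      · subst ht
        rw [zero_smul, add_zero] at hst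
        by_contra hs
        exact hqP (by simpa [smul_smul, inv_mul_cancel₀ hs] using P.smul_mem s⁻¹ hst)
      · exfalso
        apply hno (-(t⁻¹ * s))
        have hP : (t⁻¹ * s) • q + w ∈ P := by
          have := P.smul_mem t⁻¹ hst
          rwa [smul_add, smul_smul, smul_smul, inv_mul_cancel₀ ht, one_smul] at this
        rw [← Submodule.Quotient.mk_smul, Submodule.Quotient.eq, ← Submodule.comap_inf, Submodule.mem_comap,
          Submodule.subtype_apply]
        have hval : (((-(t⁻¹ * s)) • (⟨q, hqQ⟩ : ↥Q) - (⟨w, hwQ⟩ : ↥Q) : ↥Q) : V)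
            = -((t⁻¹ * s) • q + w) := by
          push_cast
          rw [neg_smul]; abel
        rw [hval]
        exact Submodule.mem_inf.2 ⟨Q.neg_mem (add_mem (Q.smul_mem _ hqQ) hwQ), P.neg_mem hP⟩
    · by_cases ht : t = 0
      · exact ht
      · exfalso
        apply hno (-(t⁻¹ * s))
        have hP : (t⁻¹ * s) • q + w ∈ P := by
          have := P.smul_mem t⁻¹ hst
          rwa [smul_add, smul_smul, smul_smul, inv_mul_cancel₀ ht, one_smul] at this
        rw [← Submodule.Quotient.mk_smul, Submodule.Quotient.eq, ← Submodule.comap_inf, Submodule.mem_comap,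
          Submodule.subtype_apply]
        have hval : (((-(t⁻¹ * s)) • (⟨q, hqQ⟩ : ↥Q) - (⟨w, hwQ⟩ : ↥Q) : ↥Q) : V)
            = -((t⁻¹ * s) • q + w) := by
          push_cast
          rw [neg_smul]; abel
        rw [hval]
        exact Submodule.mem_inf.2 ⟨Q.neg_mem (add_mem (Q.smul_mem _ hqQ) hwQ), P.neg_mem hP⟩
  · rw [Cardinal.one_le_iff_pos]
    exact rank_pos_iff_exists_ne_zero.2 ⟨_, hv₀⟩

end Aux

/-- If for `P, Q ∈ 𝒢` there is `R ∈ 𝒢` with `R ≠ P`, `R ≠ Q` such that every `X ∈ 𝒢`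
complementary to `R` is complementary to `P` or to `Q`, then `P` and `Q` are adjacent. -/
theorem stmt_1 (K V : Type*) [DivisionRing K] [AddCommGroup V] [Module K V]
    (P Q : Submodule K V) (hP : InG K V P) (hQ : InG K V Q)
    (R : Submodule K V) (hR : InG K V R) (hRP : R ≠ P) (hRQ : R ≠ Q)
    (hmain : ∀ X : Submodule K V, InG K V X → IsCompl X R → (IsCompl X P ∨ IsCompl X Q)) :
    Adjacent K V P Q := by
  have hmain' : ∀ X : Submodule K V, IsCompl X R → (IsCompl X P ∨ IsCompl X Q) :=
    fun X hX => hmain X (inG_of_isCompl hR hX) hX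
  have hmain'' : ∀ X : Submodule K V, IsCompl X R → (IsCompl X Q ∨ IsCompl X P) :=
    fun X hX => (hmain' X hX).symm
  obtain ⟨hQP, hkQ⟩ := keyQ P Q R hRP hRQ hmain'
  obtain ⟨hPQ, hkP⟩ := keyQ Q P R hRQ hRP hmain''
  constructor
  · exact quotRank_eq_one P Q hQP hkQ
  · rw [sup_comm P Q]
    exact quotRank_eq_one Q P hPQ hkP
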